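/- Let Ω ⊂ ℝ² be a bounded domain and let σ ∈ L^∞(Ω) with ess inf σ > 0. Define the forward map F(τ) := u^τ ∈ H¹₀(Ω) ⊂ L²(Ω) (weak solution of ∇·(τ∇u)=1 with homogeneous Dirichlet boundary conditions) and, for κ ∈ L^∞(Ω), define F'(σ)κ := v_κ^σ, the solution of the linearized problem ∫_Ω σ ∇v_κ^σ·∇w dx = -∫_Ω κ ∇u^σ·∇w dx for all w ∈ H¹₀(Ω). Then F is differentiable at σ with respect to the L^∞-norm in the following sense: ‖F(σ+κ) − F(σ) − F'(σ)κ‖_{L²(Ω)} / ‖κ‖_{L^∞(Ω)} → 0 as ‖κ‖_{L^∞(Ω)} → 0, where the limit is taken over κ ∈ L^∞(Ω) with ess inf(σ+κ) > 0 (equivalently, over κ satisfying ess inf(σ+κ) ≥ (ess inf σ)/2, which holds for all sufficiently small ‖κ‖_{L^∞(Ω)}). -/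

import Mathlib

open MeasureTheory Filter
open scoped RealInnerProductSpace

noncomputable section

/-- Abbreviation for the plane `ℝ²`. -/
abbrev E2 : Type := EuclideanSpace ℝ (Fin 2)

/-- Membership in `H¹₀(Ω)`: the pair `(u, gu)` — a function together with its (weak)
gradient — lies in `L²(Ω)` and is an `H¹(Ω)`-limit of a sequence of smooth functions
compactly supported in `Ω` (i.e. `u` lies in the closure of `C_c^∞(Ω)` in `H¹(Ω)`). -/
def MemH10 (Ω : Set E2) (u : E2 → ℝ) (gu : E2 → E2) : Prop :=
  MemLp u 2 (volume.restrict Ω) ∧ MemLp gu 2 (volume.restrict Ω) ∧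
  ∃ φ : ℕ → E2 → ℝ,
    (∀ n, ContDiff ℝ (⊤ : ℕ∞) (φ n) ∧ HasCompactSupport (φ n) ∧ tsupport (φ n) ⊆ Ω) ∧
    Tendsto (fun n => ∫ x in Ω, (φ n x - u x) ^ 2) atTop (nhds 0) ∧
    Tendsto (fun n => ∫ x in Ω, ‖gradient (φ n) x - gu x‖ ^ 2) atTop (nhds 0)

open scoped ENNReal NNReal
set_option linter.unusedSectionVars false
set_option maxHeartbeats 1000000

section AuxL2
variable {α : Type*} [MeasurableSpace α] {ν : Measure α}
variable {G : Type*} [NormedAddCommGroup G] [InnerProductSpace ℝ G]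


variable {α : Type*} [MeasurableSpace α] {ν : Measure α}
variable {G : Type*} [NormedAddCommGroup G] [InnerProductSpace ℝ G]

/-- `L²` norm squared equals the integral of the squared norm. -/
lemma integral_norm_sq_eq {f : α → G} (hf : MemLp f 2 ν) :
    ∫ x, ‖f x‖ ^ 2 ∂ν = ((eLpNorm f 2 ν).toReal) ^ 2 := by
  have h1 : ∫ x, ‖f x‖ ^ 2 ∂ν = ∫ x, ⟪f x, f x⟫ ∂ν := by
    refine integral_congr_ae (Eventually.of_forall fun x => ?_)
    exact (real_inner_self_eq_norm_sq (f x)).symm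
  have h2 : ∫ x, ⟪f x, f x⟫ ∂ν = ∫ x, ⟪(hf.toLp f : α → G) x, (hf.toLp f : α → G) x⟫ ∂ν := by
    refine integral_congr_ae ?_
    filter_upwards [hf.coeFn_toLp] with x hx
    rw [hx]
  rw [h1, h2, ← L2.inner_def, real_inner_self_eq_norm_sq, Lp.norm_toLp]

lemma integrable_inner_of_memℒp2 {f g : α → G} (hf : MemLp f 2 ν) (hg : MemLp g 2 ν) :
    Integrable (fun x => ⟪f x, g x⟫) ν := by
  refine (L2.integrable_inner (𝕜 := ℝ) (hf.toLp f) (hg.toLp g)).congr ?_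
  filter_upwards [hf.coeFn_toLp, hg.coeFn_toLp] with x hx hy
  rw [hx, hy]

/-- Cauchy–Schwarz for the integral of an inner product of two `L²` functions. -/
lemma integral_inner_le {f g : α → G} (hf : MemLp f 2 ν) (hg : MemLp g 2 ν) :
    ∫ x, ‖f x‖ * ‖g x‖ ∂ν ≤ (eLpNorm f 2 ν).toReal * (eLpNorm g 2 ν).toReal := by
  have hfn : MemLp (fun x => ‖f x‖) 2 ν := hf.norm
  have hgn : MemLp (fun x => ‖g x‖) 2 ν := hg.norm
  set A := hfn.toLp _
  set B := hgn.toLp _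
  have h1 : ∫ x, ‖f x‖ * ‖g x‖ ∂ν = ⟪A, B⟫ := by
    rw [L2.inner_def]
    refine integral_congr_ae ?_
    filter_upwards [hfn.coeFn_toLp, hgn.coeFn_toLp] with x hx hy
    rw [hx, hy]; simp [RCLike.inner_apply]; ring
  have h2 : ⟪A, B⟫ ≤ ‖A‖ * ‖B‖ := real_inner_le_norm A B
  rw [h1]
  refine h2.trans (le_of_eq ?_)
  rw [Lp.norm_toLp, Lp.norm_toLp, eLpNorm_norm, eLpNorm_norm]

lemma integrable_weighted_inner {τ : α → ℝ} {f g : α → G} {M : ℝ}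
    (hτ : AEStronglyMeasurable τ ν) (hτM : ∀ᵐ x ∂ν, |τ x| ≤ M)
    (hf : MemLp f 2 ν) (hg : MemLp g 2 ν) :
    Integrable (fun x => τ x * ⟪f x, g x⟫) ν := by
  refine Integrable.bdd_mul (c := M) (integrable_inner_of_memℒp2 hf hg) hτ ?_
  filter_upwards [hτM] with x hx
  simpa [Real.norm_eq_abs] using hx

/-- Weighted Cauchy–Schwarz estimate. -/
lemma abs_integral_weighted_inner_le {τ : α → ℝ} {f g : α → G} {M : ℝ}
    (hτ : AEStronglyMeasurable τ ν) (hM : 0 ≤ M) (hτM : ∀ᵐ x ∂ν, |τ x| ≤ M)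
    (hf : MemLp f 2 ν) (hg : MemLp g 2 ν) :
    |∫ x, τ x * ⟪f x, g x⟫ ∂ν| ≤ M * ((eLpNorm f 2 ν).toReal * (eLpNorm g 2 ν).toReal) := by
  have h0 : |∫ x, τ x * ⟪f x, g x⟫ ∂ν| ≤ ∫ x, |τ x * ⟪f x, g x⟫| ∂ν := by
    simpa [Real.norm_eq_abs, abs_mul] using
      norm_integral_le_integral_norm (fun x => τ x * ⟪f x, g x⟫) (μ := ν)
  have h1 : ∫ x, |τ x * ⟪f x, g x⟫| ∂ν ≤ ∫ x, M * (‖f x‖ * ‖g x‖) ∂ν := by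
    refine integral_mono_ae ((integrable_weighted_inner hτ hτM hf hg).abs) ?_ ?_
    · exact (integrable_inner_of_memℒp2 hf.norm hg.norm).const_mul M |>.congr
        (Eventually.of_forall fun x => by simp [RCLike.inner_apply, mul_comm])
    · filter_upwards [hτM] with x hx
      rw [abs_mul]
      exact mul_le_mul hx (abs_real_inner_le_norm _ _) (abs_nonneg _)
        hM
  have h2 : ∫ x, M * (‖f x‖ * ‖g x‖) ∂ν = M * ∫ x, ‖f x‖ * ‖g x‖ ∂ν := integral_const_mul _ _
  calc |∫ x, τ x * ⟪f x, g x⟫ ∂ν| ≤ ∫ x, M * (‖f x‖ * ‖g x‖) ∂ν := h0.trans h1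
    _ = M * ∫ x, ‖f x‖ * ‖g x‖ ∂ν := h2
    _ ≤ M * ((eLpNorm f 2 ν).toReal * (eLpNorm g 2 ν).toReal) :=
        mul_le_mul_of_nonneg_left (integral_inner_le hf hg) hM

/-- Coercivity estimate. -/
lemma coercivity {τ : α → ℝ} {g : α → G} {c M : ℝ}
    (hτ : AEStronglyMeasurable τ ν) (hτM : ∀ᵐ x ∂ν, |τ x| ≤ M)
    (hc : ∀ᵐ x ∂ν, c ≤ τ x) (hg : MemLp g 2 ν) :
    c * ((eLpNorm g 2 ν).toReal) ^ 2 ≤ ∫ x, τ x * ⟪g x, g x⟫ ∂ν := by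
  have hint : Integrable (fun x => ‖g x‖ ^ 2) ν := by
    refine (integrable_inner_of_memℒp2 hg hg).congr (Eventually.of_forall fun x => ?_)
    exact real_inner_self_eq_norm_sq (g x)
  have h1 : ∫ x, c * ‖g x‖ ^ 2 ∂ν ≤ ∫ x, τ x * ⟪g x, g x⟫ ∂ν := by
    refine integral_mono_ae (hint.const_mul c) (integrable_weighted_inner hτ hτM hg hg) ?_
    filter_upwards [hc] with x hx
    show c * ‖g x‖ ^ 2 ≤ τ x * ⟪g x, g x⟫
    rw [real_inner_self_eq_norm_sq]
    exact mul_le_mul_of_nonneg_right hx (by positivity)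
  calc c * ((eLpNorm g 2 ν).toReal) ^ 2 = c * ∫ x, ‖g x‖ ^ 2 ∂ν := by
        rw [integral_norm_sq_eq hg]
    _ = ∫ x, c * ‖g x‖ ^ 2 ∂ν := (integral_const_mul _ _).symm
    _ ≤ _ := h1

/-- `L¹`–`L²` estimate on a finite measure space. -/
lemma abs_integral_le_sqrt_mul [IsFiniteMeasure ν] {f : α → ℝ} (hf : MemLp f 2 ν) :
    |∫ x, f x ∂ν| ≤ (eLpNorm (fun _ : α => (1 : ℝ)) 2 ν).toReal * (eLpNorm f 2 ν).toReal := by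
  have h1 : MemLp (fun _ : α => (1 : ℝ)) 2 ν := memLp_const 1
  have h0 : |∫ x, f x ∂ν| ≤ ∫ x, |f x| ∂ν := by
    simpa [Real.norm_eq_abs] using norm_integral_le_integral_norm f (μ := ν)
  have h2 : ∫ x, |f x| ∂ν = ∫ x, ‖(fun _ : α => (1:ℝ)) x‖ * ‖f x‖ ∂ν := by
    simp [Real.norm_eq_abs]
  refine h0.trans ?_
  rw [h2]
  exact integral_inner_le h1 hf

/-- Convergence of square integrals to zero gives `L²`-norm convergence. -/
lemma tendsto_eLpNorm_of_tendsto_sq {q : ℕ → α → G} (hq : ∀ n, MemLp (q n) 2 ν)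
    (h : Tendsto (fun n => ∫ x, ‖q n x‖ ^ 2 ∂ν) atTop (nhds 0)) :
    Tendsto (fun n => (eLpNorm (q n) 2 ν).toReal) atTop (nhds 0) := by
  have h2 : Tendsto (fun n => ((eLpNorm (q n) 2 ν).toReal) ^ 2) atTop (nhds 0) := by
    refine h.congr fun n => integral_norm_sq_eq (hq n)
  have h3 := (Real.continuous_sqrt.tendsto 0).comp h2
  rw [Real.sqrt_zero] at h3
  refine h3.congr fun n => ?_
  simp [Real.sqrt_sq ENNReal.toReal_nonneg]

lemma tendsto_sq_of_tendsto_eLpNorm {q : ℕ → α → G} (hq : ∀ n, MemLp (q n) 2 ν)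
    (h : Tendsto (fun n => (eLpNorm (q n) 2 ν).toReal) atTop (nhds 0)) :
    Tendsto (fun n => ∫ x, ‖q n x‖ ^ 2 ∂ν) atTop (nhds 0) := by
  have h2 := (continuous_pow 2).tendsto (0:ℝ) |>.comp h
  simp only [Function.comp_def] at h2
  rw [zero_pow (by norm_num)] at h2
  exact h2.congr fun n => (integral_norm_sq_eq (hq n)).symm

/-- norm convergence from `L²` difference convergence -/
lemma tendsto_norm_of_tendsto_diff {q : ℕ → α → G} {f : α → G}
    (hq : ∀ n, MemLp (q n) 2 ν) (hf : MemLp f 2 ν)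
    (h : Tendsto (fun n => (eLpNorm (fun x => q n x - f x) 2 ν).toReal) atTop (nhds 0)) :
    Tendsto (fun n => (eLpNorm (q n) 2 ν).toReal) atTop
      (nhds ((eLpNorm f 2 ν).toReal)) := by
  have key : ∀ n, |(eLpNorm (q n) 2 ν).toReal - (eLpNorm f 2 ν).toReal|
      ≤ (eLpNorm (fun x => q n x - f x) 2 ν).toReal := by
    intro n
    have h1 : ((hq n).toLp (q n)) - (hf.toLp f) = ((hq n).sub hf).toLp (fun x => q n x - f x) := by
      rw [← MemLp.toLp_sub]; rfl
    have h2 := abs_norm_sub_norm_le ((hq n).toLp (q n)) (hf.toLp f)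
    rw [h1] at h2
    simpa [Lp.norm_toLp] using h2
  have h0 : Tendsto (fun n => (eLpNorm (q n) 2 ν).toReal - (eLpNorm f 2 ν).toReal)
      atTop (nhds 0) := by
    refine squeeze_zero_norm (fun n => ?_) h
    simpa [Real.norm_eq_abs] using key n
  have := h0.add_const ((eLpNorm f 2 ν).toReal)
  simpa using this

end AuxL2

section PoincareSection


lemma gradient_norm_eq_fderiv_norm (f : E2 → ℝ) (x : E2) :
    ‖gradient f x‖ = ‖fderiv ℝ f x‖ := by
  rw [gradient]
  exact LinearIsometryEquiv.norm_map _ _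

lemma continuous_gradient {f : E2 → ℝ} (hf : ContDiff ℝ (⊤ : ℕ∞) f) :
    Continuous (gradient f) := by
  have h := hf.continuous_fderiv (by simp)
  exact (InnerProductSpace.toDual ℝ E2).symm.continuous.comp h

lemma hasCompactSupport_gradient {f : E2 → ℝ} (hf : HasCompactSupport f) :
    HasCompactSupport (gradient f) := by
  refine HasCompactSupport.of_support_subset_isCompact hf (fun x hx => ?_)
  apply support_fderiv_subset (𝕜 := ℝ) (f := f)
  simp only [Function.mem_support] at hx ⊢
  intro h0
  exact hx (by rw [gradient, h0, map_zero])

/-- Poincaré inequality for smooth compactly supported functions in a bounded planar set. -/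
lemma poincare (Ω : Set E2) (hΩbdd : Bornology.IsBounded Ω) :
    ∃ C : ℝ, 0 ≤ C ∧ ∀ φ : E2 → ℝ, ContDiff ℝ (⊤ : ℕ∞) φ → HasCompactSupport φ →
      tsupport φ ⊆ Ω →
      (eLpNorm φ 2 (volume.restrict Ω)).toReal
        ≤ C * (eLpNorm (gradient φ) 2 (volume.restrict Ω)).toReal := by
  set μ := volume.restrict Ω
  have hμfin : volume Ω < ⊤ := hΩbdd.measure_lt_top
  set C1 : ℝ≥0 := eLpNormLESNormFDerivOfLeConst ℝ (volume : Measure E2) Ω (3/2) 2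
  set Cen : ℝ≥0∞ := (C1 : ℝ≥0∞) * (volume Ω) ^ ((3/2 : ℝ)⁻¹ - (2:ℝ)⁻¹)
  have hCenlt : Cen < ⊤ := by
    apply ENNReal.mul_lt_top ENNReal.coe_lt_top
    exact ENNReal.rpow_lt_top_of_nonneg (by norm_num) hμfin.ne
  refine ⟨Cen.toReal, ENNReal.toReal_nonneg, fun φ hφ hφc hφΩ => ?_⟩
  have hsupp : Function.support φ ⊆ Ω := (subset_tsupport φ).trans hφΩ
  have hfin2 : Module.finrank ℝ E2 = 2 := finrank_euclideanSpace_fin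
  -- Sobolev inequality
  have hsob : eLpNorm φ (2 : ℝ≥0) (volume : Measure E2)
      ≤ (C1 : ℝ≥0∞) * eLpNorm (fderiv ℝ φ) (3/2 : ℝ≥0) (volume : Measure E2) := by
    refine eLpNorm_le_eLpNorm_fderiv_of_le (volume : Measure E2)
      (hφ.of_le (by exact_mod_cast le_top)) hsupp
      (by exact_mod_cast (by norm_num : (1:ℝ) ≤ 3/2)) ?_ ?_ hΩbdd
    · rw [hfin2]; exact_mod_cast (by norm_num : (3/2:ℝ) < 2)
    · rw [hfin2]; push_cast; norm_num
  -- restrict on the right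
  have hres : eLpNorm (fderiv ℝ φ) (3/2 : ℝ≥0) (volume : Measure E2)
      = eLpNorm (fderiv ℝ φ) (3/2 : ℝ≥0) μ := by
    exact (eLpNorm_restrict_eq_of_support_subset (μ := volume) (s := Ω) (f := fderiv ℝ φ)
      ((support_fderiv_subset ℝ).trans hφΩ)).symm
  -- Hölder on finite measure
  have hhold : eLpNorm (fderiv ℝ φ) (3/2 : ℝ≥0) μ
      ≤ eLpNorm (fderiv ℝ φ) (2 : ℝ≥0) μ * (μ Set.univ) ^ ((3/2 : ℝ)⁻¹ - (2:ℝ)⁻¹) := by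
    have hm : ((3/2 : ℝ≥0) : ℝ≥0∞) ≤ ((2 : ℝ≥0) : ℝ≥0∞) := by
      rw [ENNReal.coe_le_coe]
      exact_mod_cast (by norm_num : (3/2:ℝ) ≤ 2)
    have := eLpNorm_le_eLpNorm_mul_rpow_measure_univ (μ := μ) hm
      ((hφ.continuous_fderiv (by simp)).aestronglyMeasurable)
    convert this using 2
    simp only [one_div]
    norm_num
  have hμuniv : μ Set.univ = volume Ω := by
    rw [Measure.restrict_apply_univ]
  -- gradient vs fderiv
  have hgrad : eLpNorm (fderiv ℝ φ) (2 : ℝ≥0) μ = eLpNorm (gradient φ) 2 μ := by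
    refine (eLpNorm_congr_norm_ae (Eventually.of_forall fun x => ?_)).symm
    exact gradient_norm_eq_fderiv_norm φ x
  have hmono : eLpNorm φ 2 μ ≤ eLpNorm φ (2 : ℝ≥0) (volume : Measure E2) := by
    exact eLpNorm_mono_measure φ Measure.restrict_le_self
  have hchain : eLpNorm φ 2 μ ≤ Cen * eLpNorm (gradient φ) 2 μ := by
    calc eLpNorm φ 2 μ ≤ (C1 : ℝ≥0∞) * eLpNorm (fderiv ℝ φ) (3/2 : ℝ≥0) volume :=
          hmono.trans hsob
      _ = (C1 : ℝ≥0∞) * eLpNorm (fderiv ℝ φ) (3/2 : ℝ≥0) μ := by rw [hres]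
      _ ≤ (C1 : ℝ≥0∞) * (eLpNorm (fderiv ℝ φ) (2 : ℝ≥0) μ * (μ Set.univ) ^ ((3/2 : ℝ)⁻¹ - (2:ℝ)⁻¹)) :=
          mul_le_mul_right hhold _
      _ = Cen * eLpNorm (gradient φ) 2 μ := by
          rw [hgrad, hμuniv]; ring
  have hfingrad : eLpNorm (gradient φ) 2 μ < ⊤ := by
    have : MemLp (gradient φ) 2 μ :=
      ((continuous_gradient hφ).memLp_of_hasCompactSupport (hasCompactSupport_gradient hφc)).restrict Ω
    exact this.2
  calc (eLpNorm φ 2 μ).toReal ≤ (Cen * eLpNorm (gradient φ) 2 μ).toReal := by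
        refine ENNReal.toReal_mono ?_ hchain
        exact (ENNReal.mul_lt_top hCenlt hfingrad).ne
    _ = Cen.toReal * (eLpNorm (gradient φ) 2 μ).toReal := ENNReal.toReal_mul

end PoincareSection

lemma gradient_sub_of_contDiff {f g : E2 → ℝ} (hf : ContDiff ℝ (⊤ : ℕ∞) f)
    (hg : ContDiff ℝ (⊤ : ℕ∞) g) (x : E2) :
    gradient (fun y => f y - g y) x = gradient f x - gradient g x := by
  unfold gradient
  rw [fderiv_fun_sub ((hf.differentiable (by simp)).differentiableAt)
    ((hg.differentiable (by simp)).differentiableAt), map_sub]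

lemma smooth_memℒp2 {Ω : Set E2} {φ : E2 → ℝ} (h1 : ContDiff ℝ (⊤ : ℕ∞) φ)
    (h2 : HasCompactSupport φ) : MemLp φ 2 (volume.restrict Ω) :=
  (h1.continuous.memLp_of_hasCompactSupport h2).restrict Ω

lemma smooth_grad_memℒp2 {Ω : Set E2} {φ : E2 → ℝ} (h1 : ContDiff ℝ (⊤ : ℕ∞) φ)
    (h2 : HasCompactSupport φ) : MemLp (gradient φ) 2 (volume.restrict Ω) :=
  ((continuous_gradient h1).memLp_of_hasCompactSupport (hasCompactSupport_gradient h2)).restrict Ω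

/-- integral over `Ω` of a real square, in norm form -/
lemma integral_sq_eq_norm {Ω : Set E2} (f : E2 → ℝ) :
    ∫ x in Ω, (f x) ^ 2 = ∫ x in Ω, ‖f x‖ ^ 2 := by
  refine integral_congr_ae (Eventually.of_forall fun x => ?_)
  simp [Real.norm_eq_abs, sq_abs]

lemma tendsto_sq_sub_sub {α : Type*} [MeasurableSpace α] {ν : Measure α}
    {G : Type*} [NormedAddCommGroup G] [InnerProductSpace ℝ G]
    {q1 q2 : ℕ → α → G} {f1 f2 : α → G}
    (hq1 : ∀ n, MemLp (q1 n) 2 ν) (hq2 : ∀ n, MemLp (q2 n) 2 ν)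
    (hf1 : MemLp f1 2 ν) (hf2 : MemLp f2 2 ν)
    (k1 : Tendsto (fun n => ∫ x, ‖q1 n x - f1 x‖ ^ 2 ∂ν) atTop (nhds 0))
    (k2 : Tendsto (fun n => ∫ x, ‖q2 n x - f2 x‖ ^ 2 ∂ν) atTop (nhds 0)) :
    Tendsto (fun n => ∫ x, ‖(q1 n x - q2 n x) - (f1 x - f2 x)‖ ^ 2 ∂ν) atTop (nhds 0) := by
  have k1' : Tendsto (fun n => (eLpNorm (fun x => q1 n x - f1 x) 2 ν).toReal) atTop (nhds 0) :=
    tendsto_eLpNorm_of_tendsto_sq (fun n => (hq1 n).sub hf1) k1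
  have k2' : Tendsto (fun n => (eLpNorm (fun x => q2 n x - f2 x) 2 ν).toReal) atTop (nhds 0) :=
    tendsto_eLpNorm_of_tendsto_sq (fun n => (hq2 n).sub hf2) k2
  have key : Tendsto (fun n =>
      (eLpNorm (fun x => (q1 n x - q2 n x) - (f1 x - f2 x)) 2 ν).toReal) atTop (nhds 0) := by
    refine squeeze_zero (fun n => ENNReal.toReal_nonneg) (fun n => ?_)
      (by simpa using k1'.add k2')
    have htri : eLpNorm (fun x => (q1 n x - q2 n x) - (f1 x - f2 x)) 2 ν
        ≤ eLpNorm (fun x => q1 n x - f1 x) 2 ν + eLpNorm (fun x => q2 n x - f2 x) 2 ν := by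
      have heq : (fun x => (q1 n x - q2 n x) - (f1 x - f2 x))
          = (fun x => q1 n x - f1 x) - (fun x => q2 n x - f2 x) := by
        funext x; simp only [Pi.sub_apply]; abel
      rw [heq]
      exact eLpNorm_sub_le (((hq1 n).sub hf1).aestronglyMeasurable)
        (((hq2 n).sub hf2).aestronglyMeasurable) (by norm_num)
    refine (ENNReal.toReal_mono ?_ htri).trans (le_of_eq (ENNReal.toReal_add
      ((hq1 n).sub hf1).2.ne ((hq2 n).sub hf2).2.ne))
    exact (ENNReal.add_lt_top.mpr ⟨((hq1 n).sub hf1).2, ((hq2 n).sub hf2).2⟩).ne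
  exact tendsto_sq_of_tendsto_eLpNorm
    (fun n => ((hq1 n).sub (hq2 n)).sub (hf1.sub hf2)) key

lemma MemH10.sub' {Ω : Set E2} {u w : E2 → ℝ} {gu gw : E2 → E2}
    (hu : MemH10 Ω u gu) (hw : MemH10 Ω w gw) :
    MemH10 Ω (fun x => u x - w x) (fun x => gu x - gw x) := by
  obtain ⟨hu2, hgu2, φ, hφ, hφu, hφgu⟩ := hu
  obtain ⟨hw2, hgw2, ψ, hψ, hψw, hψgw⟩ := hw
  set μ := volume.restrict Ω with hμ
  have hφ2 : ∀ n, MemLp (φ n) 2 μ := fun n => smooth_memℒp2 (hφ n).1 (hφ n).2.1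
  have hψ2 : ∀ n, MemLp (ψ n) 2 μ := fun n => smooth_memℒp2 (hψ n).1 (hψ n).2.1
  have hφg2 : ∀ n, MemLp (gradient (φ n)) 2 μ := fun n => smooth_grad_memℒp2 (hφ n).1 (hφ n).2.1
  have hψg2 : ∀ n, MemLp (gradient (ψ n)) 2 μ := fun n => smooth_grad_memℒp2 (hψ n).1 (hψ n).2.1
  refine ⟨hu2.sub hw2, hgu2.sub hgw2, fun n x => φ n x - ψ n x, fun n => ⟨?_, ?_, ?_⟩, ?_, ?_⟩
  · exact (hφ n).1.sub (hψ n).1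
  · refine HasCompactSupport.of_support_subset_isCompact
      ((hφ n).2.1.union (hψ n).2.1) ?_
    exact (Function.support_sub _ _).trans
      (Set.union_subset_union (subset_tsupport _) (subset_tsupport _))
  · refine (closure_minimal ((Function.support_sub _ _).trans
      (Set.union_subset_union (subset_tsupport _) (subset_tsupport _)))
      ((isClosed_tsupport _).union (isClosed_tsupport _))).trans ?_
    exact Set.union_subset (hφ n).2.2 (hψ n).2.2
  · have := tendsto_sq_sub_sub hφ2 hψ2 hu2 hw2
      (hφu.congr fun n => integral_sq_eq_norm _)
      (hψw.congr fun n => integral_sq_eq_norm _)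
    refine this.congr fun n => ?_
    rw [← integral_sq_eq_norm]
  · have := tendsto_sq_sub_sub hφg2 hψg2 hgu2 hgw2 hφgu hψgw
    refine this.congr fun n => ?_
    refine integral_congr_ae (Eventually.of_forall fun x => ?_)
    simp only
    rw [gradient_sub_of_contDiff (hφ n).1 (hψ n).1]

lemma poincare_H10 (Ω : Set E2) (hΩbdd : Bornology.IsBounded Ω) :
    ∃ C : ℝ, 0 ≤ C ∧ ∀ u gu, MemH10 Ω u gu →
      (eLpNorm u 2 (volume.restrict Ω)).toReal
        ≤ C * (eLpNorm gu 2 (volume.restrict Ω)).toReal := by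
  obtain ⟨C, hC0, hC⟩ := poincare Ω hΩbdd
  refine ⟨C, hC0, fun u gu hu => ?_⟩
  obtain ⟨hu2, hgu2, φ, hφ, hφu, hφgu⟩ := hu
  have hφ2 : ∀ n, MemLp (φ n) 2 (volume.restrict Ω) :=
    fun n => smooth_memℒp2 (hφ n).1 (hφ n).2.1
  have hφg2 : ∀ n, MemLp (gradient (φ n)) 2 (volume.restrict Ω) :=
    fun n => smooth_grad_memℒp2 (hφ n).1 (hφ n).2.1
  have t1 : Tendsto (fun n => (eLpNorm (φ n) 2 (volume.restrict Ω)).toReal) atTop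
      (nhds ((eLpNorm u 2 (volume.restrict Ω)).toReal)) := by
    refine tendsto_norm_of_tendsto_diff hφ2 hu2 ?_
    refine tendsto_eLpNorm_of_tendsto_sq (fun n => (hφ2 n).sub hu2) ?_
    exact hφu.congr fun n => integral_sq_eq_norm _
  have t2 : Tendsto (fun n => (eLpNorm (gradient (φ n)) 2 (volume.restrict Ω)).toReal) atTop
      (nhds ((eLpNorm gu 2 (volume.restrict Ω)).toReal)) := by
    refine tendsto_norm_of_tendsto_diff hφg2 hgu2 ?_
    exact tendsto_eLpNorm_of_tendsto_sq (fun n => (hφg2 n).sub hgu2) hφgu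
  exact le_of_tendsto_of_tendsto' t1 (t2.const_mul C) fun n =>
    hC (φ n) (hφ n).1 (hφ n).2.1 (hφ n).2.2

lemma ae_abs_le_of_memℒp_top {α : Type*} [MeasurableSpace α] {ν : Measure α} {f : α → ℝ}
    (hf : MemLp f ⊤ ν) : ∀ᵐ x ∂ν, |f x| ≤ (eLpNormEssSup f ν).toReal := by
  have hlt : eLpNormEssSup f ν < ⊤ := by
    rw [← eLpNorm_exponent_top]; exact hf.2
  filter_upwards [ae_le_eLpNormEssSup (f := f) (μ := ν)] with x hx
  have h2 := ENNReal.toReal_mono hlt.ne hx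
  simpa [Real.norm_eq_abs] using h2

lemma cancel_sq {c b N : ℝ} (hc : 0 < c) (hN : 0 ≤ N) (hb : 0 ≤ b)
    (h : c * N ^ 2 ≤ b * N) : c * N ≤ b := by
  rcases eq_or_lt_of_le hN with h0 | h0
  · rw [← h0]; simpa using hb
  · have h2 : (c * N) * N ≤ b * N := by nlinarith
    exact le_of_mul_le_mul_right h2 h0


/-- (Differentiability of the forward map with respect to the `L^∞`-norm.)
For a bounded domain `Ω ⊆ ℝ²` and `σ ∈ L^∞(Ω)` with `ess inf σ > 0`, the forward map
`F(τ) := u^τ` satisfies `‖F(σ+κ) − F(σ) − F'(σ)κ‖_{L²(Ω)} / ‖κ‖_{L^∞(Ω)} → 0` as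
`‖κ‖_{L^∞(Ω)} → 0` over directions `κ ∈ L^∞(Ω)` with `ess inf (σ+κ) > 0`, where
`F'(σ)κ := v_κ^σ` solves the linearized problem. Here this is expressed in `ε`–`δ` form. -/
theorem statement7 (Ω : Set E2) (hΩopen : IsOpen Ω) (hΩconn : IsConnected Ω)
    (hΩbdd : Bornology.IsBounded Ω)
    (σ : E2 → ℝ) (hσ : MemLp σ ⊤ (volume.restrict Ω))
    (hσ0 : 0 < essInf σ (volume.restrict Ω))
    (uσ : E2 → ℝ) (guσ : E2 → E2) (huσ : MemH10 Ω uσ guσ)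
    (hsolσ : ∀ w gw, MemH10 Ω w gw →
      (∫ x in Ω, σ x * ⟪guσ x, gw x⟫) = -∫ x in Ω, w x) :
    ∀ ε > (0 : ℝ), ∃ δ > (0 : ℝ), ∀ κ : E2 → ℝ, MemLp κ ⊤ (volume.restrict Ω) →
      essSup (fun x => |κ x|) (volume.restrict Ω) < δ →
      0 < essInf (fun x => σ x + κ x) (volume.restrict Ω) →
      ∀ (uσκ : E2 → ℝ) (guσκ : E2 → E2), MemH10 Ω uσκ guσκ →
        (∀ w gw, MemH10 Ω w gw →
          (∫ x in Ω, (σ x + κ x) * ⟪guσκ x, gw x⟫) = -∫ x in Ω, w x) →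
      ∀ (v : E2 → ℝ) (gv : E2 → E2), MemH10 Ω v gv →
        (∀ w gw, MemH10 Ω w gw →
          (∫ x in Ω, σ x * ⟪gv x, gw x⟫) = -∫ x in Ω, κ x * ⟪guσ x, gw x⟫) →
      Real.sqrt (∫ x in Ω, (uσκ x - uσ x - v x) ^ 2)
        ≤ ε * essSup (fun x => |κ x|) (volume.restrict Ω) := by
  intro ε hε
  have hμfin : volume Ω < ⊤ := hΩbdd.measure_lt_top
  haveI : IsFiniteMeasure (volume.restrict Ω) :=
    ⟨by rw [Measure.restrict_apply_univ]; exact hμfin⟩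
  have hμne : volume.restrict Ω ≠ 0 := by
    intro h0
    have := hΩopen.measure_pos (μ := volume) hΩconn.nonempty
    rw [← Measure.restrict_apply_univ] at this
    rw [h0] at this
    simp at this
  haveI : (ae (volume.restrict Ω)).NeBot := ae_neBot.mpr hμne
  obtain ⟨Cp, hCp0, hP⟩ := poincare_H10 Ω hΩbdd
  set c := essInf σ (volume.restrict Ω) with hcdef
  have hc0 : 0 < c := hσ0
  set S := (eLpNorm (fun _ : E2 => (1 : ℝ)) 2 (volume.restrict Ω)).toReal with hSdef
  have hS0 : 0 ≤ S := ENNReal.toReal_nonneg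
  refine ⟨min (c / 2) (ε * c ^ 3 / (2 * S * Cp ^ 2 + 1)), ?_, ?_⟩
  · refine lt_min (by positivity) (by positivity)
  intro κ hκ hκδ hσκ0 uσκ guσκ huσκ hsolσκ v gv hv hsolv
  -- a.e. pointwise bounds
  have hσae : ∀ᵐ x ∂(volume.restrict Ω), |σ x| ≤ (eLpNormEssSup σ (volume.restrict Ω)).toReal :=
    ae_abs_le_of_memℒp_top hσ
  have hκae : ∀ᵐ x ∂(volume.restrict Ω), |κ x| ≤ (eLpNormEssSup κ (volume.restrict Ω)).toReal :=
    ae_abs_le_of_memℒp_top hκ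
  set Bσ := (eLpNormEssSup σ (volume.restrict Ω)).toReal
  set Bκ := (eLpNormEssSup κ (volume.restrict Ω)).toReal
  set T := essSup (fun x => |κ x|) (volume.restrict Ω) with hTdef
  have hκT : ∀ᵐ x ∂(volume.restrict Ω), |κ x| ≤ T := by
    refine ae_le_essSup ?_
    exact ⟨Bκ, by rw [Filter.eventually_map]; exact hκae⟩
  have hT0 : 0 ≤ T := by
    obtain ⟨x, hx⟩ := hκT.exists
    exact le_trans (abs_nonneg _) hx
  have hσc : ∀ᵐ x ∂(volume.restrict Ω), c ≤ σ x := by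
    refine ae_essInf_le ?_
    exact ⟨-Bσ, by
      rw [Filter.eventually_map]
      filter_upwards [hσae] with x hx
      simp only [ge_iff_le]
      cases abs_le.mp hx; linarith⟩
  have hTc2 : T < c / 2 := lt_of_lt_of_le hκδ (min_le_left _ _)
  have hTε : T ≤ ε * c ^ 3 / (2 * S * Cp ^ 2 + 1) :=
    le_of_lt (lt_of_lt_of_le hκδ (min_le_right _ _))
  have hσκc : ∀ᵐ x ∂(volume.restrict Ω), c / 2 ≤ σ x + κ x := by
    filter_upwards [hσc, hκT] with x h1 h2
    cases abs_le.mp h2; linarith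
  have hσκabs : ∀ᵐ x ∂(volume.restrict Ω), |σ x + κ x| ≤ Bσ + Bκ := by
    filter_upwards [hσae, hκae] with x h1 h2
    calc |σ x + κ x| ≤ |σ x| + |κ x| := abs_add_le _ _
      _ ≤ Bσ + Bκ := add_le_add h1 h2
  -- measurability
  have hσm : AEStronglyMeasurable σ (volume.restrict Ω) := hσ.aestronglyMeasurable
  have hκm : AEStronglyMeasurable κ (volume.restrict Ω) := hκ.aestronglyMeasurable
  have hσκm : AEStronglyMeasurable (fun x => σ x + κ x) (volume.restrict Ω) :=
    hσm.add hκm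
  -- the H¹₀ pairs
  have hr : MemH10 Ω (fun x => uσκ x - uσ x) (fun x => guσκ x - guσ x) := huσκ.sub' huσ
  have he : MemH10 Ω (fun x => uσκ x - uσ x - v x)
      (fun x => guσκ x - guσ x - gv x) := by
    have h2 := hr.sub' hv
    exact h2
  -- notations for norms
  set Ng := (eLpNorm guσκ 2 (volume.restrict Ω)).toReal with hNgdef
  set Nr := (eLpNorm (fun x => guσκ x - guσ x) 2 (volume.restrict Ω)).toReal with hNrdef
  set Nge := (eLpNorm (fun x => guσκ x - guσ x - gv x) 2 (volume.restrict Ω)).toReal with hNgedef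
  set Ne := (eLpNorm (fun x => uσκ x - uσ x - v x) 2 (volume.restrict Ω)).toReal with hNedef
  have hNg0 : 0 ≤ Ng := ENNReal.toReal_nonneg
  have hNr0 : 0 ≤ Nr := ENNReal.toReal_nonneg
  have hNge0 : 0 ≤ Nge := ENNReal.toReal_nonneg
  have hNe0 : 0 ≤ Ne := ENNReal.toReal_nonneg
  -- Step 1 : bound Ng
  have step1 : c * Ng ≤ 2 * S * Cp := by
    have coer : c / 2 * Ng ^ 2 ≤ ∫ x in Ω, (σ x + κ x) * ⟪guσκ x, guσκ x⟫ :=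
      coercivity hσκm hσκabs hσκc huσκ.2.1
    have heq := hsolσκ uσκ guσκ huσκ
    have habs : |∫ x in Ω, uσκ x| ≤ S * (eLpNorm uσκ 2 (volume.restrict Ω)).toReal :=
      abs_integral_le_sqrt_mul huσκ.1
    have hpu : (eLpNorm uσκ 2 (volume.restrict Ω)).toReal ≤ Cp * Ng := hP uσκ guσκ huσκ
    have hneg : -(∫ x in Ω, uσκ x) ≤ |∫ x in Ω, uσκ x| := neg_le_abs _
    have key : c / 2 * Ng ^ 2 ≤ (S * Cp) * Ng := by nlinarith
    have := cancel_sq (by positivity) hNg0 (by positivity) key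
    linarith
  -- Step 2 : the equation for r and bound Nr
  have hEqR : ∀ w gw, MemH10 Ω w gw →
      (∫ x in Ω, σ x * ⟪guσκ x - guσ x, gw x⟫) = -∫ x in Ω, κ x * ⟪guσκ x, gw x⟫ := by
    intro w gw hw
    have I1 := hsolσκ w gw hw
    have I2 := hsolσ w gw hw
    have hsplit : (∫ x in Ω, (σ x + κ x) * ⟪guσκ x, gw x⟫)
        = (∫ x in Ω, σ x * ⟪guσκ x, gw x⟫) + ∫ x in Ω, κ x * ⟪guσκ x, gw x⟫ := by
      rw [← integral_add (integrable_weighted_inner hσm hσae huσκ.2.1 hw.2.1)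
        (integrable_weighted_inner hκm hκae huσκ.2.1 hw.2.1)]
      refine integral_congr_ae (Eventually.of_forall fun x => ?_)
      simp only; ring
    have hsub : (∫ x in Ω, σ x * ⟪guσκ x - guσ x, gw x⟫)
        = (∫ x in Ω, σ x * ⟪guσκ x, gw x⟫) - ∫ x in Ω, σ x * ⟪guσ x, gw x⟫ := by
      rw [← integral_sub (integrable_weighted_inner hσm hσae huσκ.2.1 hw.2.1)
        (integrable_weighted_inner hσm hσae huσ.2.1 hw.2.1)]
      refine integral_congr_ae (Eventually.of_forall fun x => ?_)
      simp only [inner_sub_left]; ring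
    linarith
  have step2 : c * Nr ≤ T * Ng := by
    have coer : c * Nr ^ 2 ≤ ∫ x in Ω, σ x * ⟪guσκ x - guσ x, guσκ x - guσ x⟫ :=
      coercivity hσm hσae hσc hr.2.1
    have heq := hEqR _ _ hr
    have habs : |∫ x in Ω, κ x * ⟪guσκ x, guσκ x - guσ x⟫| ≤ T * (Ng * Nr) :=
      abs_integral_weighted_inner_le hκm hT0 hκT huσκ.2.1 hr.2.1
    have hneg : -(∫ x in Ω, κ x * ⟪guσκ x, guσκ x - guσ x⟫)
        ≤ |∫ x in Ω, κ x * ⟪guσκ x, guσκ x - guσ x⟫| := neg_le_abs _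
    have key : c * Nr ^ 2 ≤ (T * Ng) * Nr := by nlinarith
    exact cancel_sq hc0 hNr0 (by positivity) key
  -- Step 3 : the equation for e and bound Nge
  have step3 : c * Nge ≤ T * Nr := by
    have coer : c * Nge ^ 2
        ≤ ∫ x in Ω, σ x * ⟪guσκ x - guσ x - gv x, guσκ x - guσ x - gv x⟫ :=
      coercivity hσm hσae hσc he.2.1
    have I1 : (∫ x in Ω, σ x * ⟪guσκ x - guσ x, guσκ x - guσ x - gv x⟫)
        = -∫ x in Ω, κ x * ⟪guσκ x, guσκ x - guσ x - gv x⟫ := hEqR _ _ he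
    have I2 : (∫ x in Ω, σ x * ⟪gv x, guσκ x - guσ x - gv x⟫)
        = -∫ x in Ω, κ x * ⟪guσ x, guσκ x - guσ x - gv x⟫ := hsolv _ _ he
    have hsubσ : (∫ x in Ω, σ x * ⟪guσκ x - guσ x - gv x, guσκ x - guσ x - gv x⟫)
        = (∫ x in Ω, σ x * ⟪guσκ x - guσ x, guσκ x - guσ x - gv x⟫)
          - ∫ x in Ω, σ x * ⟪gv x, guσκ x - guσ x - gv x⟫ := by
      rw [← integral_sub (integrable_weighted_inner hσm hσae hr.2.1 he.2.1)
        (integrable_weighted_inner hσm hσae hv.2.1 he.2.1)]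
      refine integral_congr_ae (Eventually.of_forall fun x => ?_)
      simp only [inner_sub_left]; ring
    have hsubκ : (∫ x in Ω, κ x * ⟪guσκ x - guσ x, guσκ x - guσ x - gv x⟫)
        = (∫ x in Ω, κ x * ⟪guσκ x, guσκ x - guσ x - gv x⟫)
          - ∫ x in Ω, κ x * ⟪guσ x, guσκ x - guσ x - gv x⟫ := by
      rw [← integral_sub (integrable_weighted_inner hκm hκae huσκ.2.1 he.2.1)
        (integrable_weighted_inner hκm hκae huσ.2.1 he.2.1)]
      refine integral_congr_ae (Eventually.of_forall fun x => ?_)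
      simp only [inner_sub_left]; ring
    have habs : |∫ x in Ω, κ x * ⟪guσκ x - guσ x, guσκ x - guσ x - gv x⟫| ≤ T * (Nr * Nge) :=
      abs_integral_weighted_inner_le hκm hT0 hκT hr.2.1 he.2.1
    have hneg : -(∫ x in Ω, κ x * ⟪guσκ x - guσ x, guσκ x - guσ x - gv x⟫)
        ≤ |∫ x in Ω, κ x * ⟪guσκ x - guσ x, guσκ x - guσ x - gv x⟫| := neg_le_abs _
    have key : c * Nge ^ 2 ≤ (T * Nr) * Nge := by nlinarith
    exact cancel_sq hc0 hNge0 (by positivity) key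
  -- Step 4 : Poincaré for e and conclusion
  have step4 : Ne ≤ Cp * Nge := hP _ _ he
  have hgoal : Real.sqrt (∫ x in Ω, (uσκ x - uσ x - v x) ^ 2) = Ne := by
    rw [integral_sq_eq_norm, integral_norm_sq_eq he.1, Real.sqrt_sq hNe0]
  rw [hgoal]
  -- final arithmetic
  have h1 : c ^ 3 * Nge ≤ 2 * S * Cp * T ^ 2 := by
    have k1 := mul_le_mul_of_nonneg_left step3 (mul_nonneg hc0.le hc0.le)
    have k2 := mul_le_mul_of_nonneg_left step2 (mul_nonneg hc0.le hT0)
    have k3 := mul_le_mul_of_nonneg_left step1 (mul_nonneg hT0 hT0)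
    nlinarith [k1, k2, k3]
  have hD : (0:ℝ) < 2 * S * Cp ^ 2 + 1 := by positivity
  have hTD : T * (2 * S * Cp ^ 2 + 1) ≤ ε * c ^ 3 := (le_div_iff₀ hD).mp hTε
  have h2 : Ne * ((2 * S * Cp ^ 2 + 1) * c ^ 3) ≤ (ε * T) * ((2 * S * Cp ^ 2 + 1) * c ^ 3) := by
    have k4 := mul_le_mul_of_nonneg_left h1 hCp0
    have k5 := mul_le_mul_of_nonneg_left step4 (by positivity : (0:ℝ) ≤ c ^ 3)
    have k6 := mul_le_mul_of_nonneg_left hTD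
      (by positivity : (0:ℝ) ≤ 2 * S * Cp ^ 2 * T)
    nlinarith [k4, k5, k6, mul_nonneg (mul_nonneg hε.le hT0) (by positivity : (0:ℝ) ≤ c ^ 3)]
  have hpos : (0:ℝ) < (2 * S * Cp ^ 2 + 1) * c ^ 3 := by positivity
  exact le_of_mul_le_mul_right h2 hpos
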